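/- For every real ε > 0 and every integer C ≥ 2 there exists n₀ such that for every even integer n with n ≥ max(2C, n₀), setting K = C^n, the graph G_{C,n} satisfies: (а) its edge set can be partitioned into at most K^{1 + 2·ln(10.5)/ln C + ε} pairwise edge-disjoint induced matchings, and (b) the number of unordered pairs of distinct vertices that are NOT adjacent in G_{C,n} is at most K^{2 − 1/(2C⁴·ln C) + ε}. (Hence G_{C,n} is an (r, t)-Ruzsa–Szemerédi graph with t ≤ K^{1 + 2·ln(10.5)/ln C + ε} and average matching size r = |E|/t, missing at most K^{2 − 1/(2C⁴·ln C) + ε} edges.) -/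

import Mathlib

/-- `M` is an induced matching of the simple graph `G`, where each edge of the matching is
recorded as an ordered pair. The cross-adjacency condition simultaneously forces the edges
to be pairwise vertex-disjoint and the matching to be induced. -/
def IsInducedMatching {V : Type*} (G : SimpleGraph V) (M : Finset (V × V)) : Prop :=
  (∀ e ∈ M, G.Adj e.1 e.2) ∧
  ∀ e ∈ M, ∀ f ∈ M, e ≠ f →
    ¬ G.Adj e.1 f.1 ∧ ¬ G.Adj e.1 f.2 ∧ ¬ G.Adj e.2 f.1 ∧ ¬ G.Adj e.2 f.2

/-- The Alon–Moitra–Sudakov graph `G_{C,n}` on the vertex set `{0, …, C-1}^n`: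
two distinct vertices `u, v` are adjacent iff `| ‖u - v‖² - μ | < n`, where
`‖u - v‖² = Σ_i (u_i - v_i)²` and `μ = n (C² - 1) / 6`. -/
def amsGraph (C n : ℕ) : SimpleGraph (Fin n → Fin C) where
  Adj u v := u ≠ v ∧
    |(∑ i, ((u i : ℝ) - (v i : ℝ)) ^ 2) - (n : ℝ) * ((C : ℝ) ^ 2 - 1) / 6| < (n : ℝ)
  symm := by
    constructor
    intro u v h
    refine ⟨h.1.symm, ?_⟩
    have hsum : ∑ i, ((v i : ℝ) - (u i : ℝ)) ^ 2 = ∑ i, ((u i : ℝ) - (v i : ℝ)) ^ 2 :=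
      Finset.sum_congr rfl fun i _ => by ring
    rw [hsum]
    exact h.2
  loopless := ⟨fun u h => h.1 rfl⟩

open Finset

lemma exists_greedy_coloring {α : Type*} [Fintype α] [DecidableEq α]
    (r : α → α → Prop) [DecidableRel r] (hsymm : ∀ a b, r a b → r b a) (m : ℕ)
    (hdeg : ∀ a, (univ.filter (r a)).card < m) :
    ∃ c : α → Fin m, ∀ a b, r a b → a ≠ b → c a ≠ c b := by
  rcases isEmpty_or_nonempty α with hα | hα
  · exact ⟨isEmptyElim, fun a => isEmptyElim a⟩
  have hm : 0 < m := lt_of_le_of_lt (Nat.zero_le _) (hdeg (Classical.arbitrary α))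
  suffices h : ∀ s : Finset α, ∃ c : α → Fin m,
      ∀ a ∈ s, ∀ b ∈ s, r a b → a ≠ b → c a ≠ c b by
    obtain ⟨c, hc⟩ := h univ
    exact ⟨c, fun a b hr hne => hc a (mem_univ a) b (mem_univ b) hr hne⟩
  intro s
  induction s using Finset.induction_on with
  | empty => exact ⟨fun _ => ⟨0, hm⟩, fun a ha => absurd ha (notMem_empty a)⟩
  | @insert a s ha ih =>
    obtain ⟨c, hc⟩ := ih
    -- colors used by neighbors of a in s
    have hcard : ((s.filter (r a)).image c).card < m := by
      calc ((s.filter (r a)).image c).card ≤ (s.filter (r a)).card := card_image_le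
        _ ≤ (univ.filter (r a)).card := card_le_card (filter_subset_filter _ (subset_univ s))
        _ < m := hdeg a
    obtain ⟨x, hx⟩ : ∃ x : Fin m, x ∉ (s.filter (r a)).image c := by
      by_contra hcon
      push_neg at hcon
      have : (univ : Finset (Fin m)) ⊆ (s.filter (r a)).image c := fun y _ => hcon y
      have := card_le_card this
      simp only [card_univ, Fintype.card_fin] at this
      omega
    refine ⟨Function.update c a x, ?_⟩
    intro u hu v hv hr hne
    have hupd : ∀ w ∈ s, Function.update c a x w = c w := by
      intro w hw
      exact Function.update_of_ne (by rintro rfl; exact ha hw) _ _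
    rcases mem_insert.1 hu with rfl | hu' <;> rcases mem_insert.1 hv with rfl | hv'
    · exact absurd rfl hne
    · rw [Function.update_self, hupd v hv']
      intro hxc
      exact hx (mem_image.2 ⟨v, mem_filter.2 ⟨hv', hr⟩, hxc.symm⟩)
    · rw [Function.update_self, hupd u hu']
      intro hxc
      exact hx (mem_image.2 ⟨u, mem_filter.2 ⟨hu', hsymm _ _ hr⟩, hxc⟩)
    · rw [hupd u hu', hupd v hv']
      exact hc u hu' v hv' hr hne

lemma amsSum_range_cast (m : ℕ) : ∑ i ∈ range m, (i : ℝ) = m * (m - 1) / 2 := by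
  induction m with
  | zero => simp
  | succ k ih => rw [sum_range_succ, ih]; push_cast; ring

lemma amsSum_range_sq_cast (m : ℕ) :
    ∑ i ∈ range m, (i : ℝ) ^ 2 = m * (m - 1) * (2 * m - 1) / 6 := by
  induction m with
  | zero => simp
  | succ k ih => rw [sum_range_succ, ih]; push_cast; ring

lemma amsMean (C : ℕ) :
    ∑ x : Fin C, ∑ y : Fin C, ((x : ℝ) - (y : ℝ)) ^ 2
      = (C : ℝ) ^ 2 * ((C : ℝ) ^ 2 - 1) / 6 := by
  have h1 : ∑ x : Fin C, (x : ℝ) = C * (C - 1) / 2 := by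
    rw [Fin.sum_univ_eq_sum_range (fun i => (i : ℝ))]; exact amsSum_range_cast C
  have h2 : ∑ x : Fin C, (x : ℝ) ^ 2 = C * (C - 1) * (2 * C - 1) / 6 := by
    rw [Fin.sum_univ_eq_sum_range (fun i => (i : ℝ) ^ 2)]; exact amsSum_range_sq_cast C
  have key : ∀ x : Fin C, ∑ y : Fin C, ((x : ℝ) - (y : ℝ)) ^ 2
      = C * (x:ℝ)^2 - 2 * (x:ℝ) * (C * (C - 1) / 2) + C * (C - 1) * (2 * C - 1) / 6 := by
    intro x
    have : ∀ y : Fin C, ((x : ℝ) - y) ^ 2 = (x:ℝ)^2 - 2 * (x:ℝ) * (y:ℝ) + (y:ℝ)^2 := by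
      intros; ring
    rw [sum_congr rfl (fun y _ => this y), sum_add_distrib, sum_sub_distrib,
      sum_const, ← mul_sum, h1, h2, card_univ, Fintype.card_fin, nsmul_eq_mul]
  rw [sum_congr rfl (fun x _ => key x), sum_add_distrib, sum_sub_distrib,
    sum_const, ← mul_sum, h2, card_univ, Fintype.card_fin, nsmul_eq_mul]
  have h3 : ∑ x : Fin C, 2 * (x : ℝ) * ((C:ℝ) * ((C:ℝ) - 1) / 2)
      = 2 * ((C:ℝ) * ((C:ℝ) - 1) / 2) * ((C:ℝ) * ((C:ℝ) - 1) / 2) := by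
    rw [← sum_mul, ← mul_sum, h1]
  rw [h3]
  ring

lemma amsExp_quadratic {x : ℝ} (hx : |x| ≤ 1) : Real.exp x ≤ 1 + x + x ^ 2 := by
  have h := Real.exp_bound hx (n := 2) (by norm_num)
  have h2 : ∑ m ∈ range 2, x ^ m / (m.factorial : ℝ) = 1 + x := by
    simp [Finset.sum_range_succ]
  rw [h2] at h
  have h3 : Real.exp x - (1 + x) ≤ |x| ^ 2 * ((2:ℕ).succ / ((2:ℕ).factorial * (2:ℕ))) :=
    le_trans (le_abs_self _) h
  have h4 : (|x|:ℝ) ^ 2 = x ^ 2 := sq_abs x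
  have h5 : ((2:ℕ).succ : ℝ) / (((2:ℕ).factorial : ℝ) * (2:ℕ)) = 3 / 4 := by norm_num
  nlinarith [sq_nonneg x]

/-- coordinate mgf bound -/
lemma amsMgf (C : ℕ) (hC : 2 ≤ C) (s : ℝ) (hs : |s| ≤ 3 / (C:ℝ)^4) :
    ∑ x : Fin C, ∑ y : Fin C,
      Real.exp (s * (((x : ℝ) - (y : ℝ)) ^ 2 - ((C:ℝ)^2 - 1) / 6))
      ≤ (C:ℝ)^2 * Real.exp (3 / (2 * (C:ℝ)^4)) := by
  set m : ℝ := ((C:ℝ)^2 - 1) / 6 with hm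
  have hCpos : (0:ℝ) < C := by positivity
  have hC2 : (2:ℝ) ≤ C := by exact_mod_cast hC
  -- each |s * (Y - m)| ≤ 1
  have hYb : ∀ x y : Fin C, 0 ≤ ((x : ℝ) - (y : ℝ)) ^ 2 ∧ ((x : ℝ) - (y : ℝ)) ^ 2 ≤ ((C:ℝ)-1)^2 := by
    intro x y
    constructor
    · positivity
    · have hx1 : (x : ℝ) ≤ (C:ℝ) - 1 := by
        have := x.isLt; have : ((x : ℕ) : ℝ) ≤ ((C - 1 : ℕ) : ℝ) := by
          exact_mod_cast Nat.le_sub_one_of_lt x.isLt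
        push_cast [Nat.cast_sub (by omega : 1 ≤ C)] at this
        linarith
      have hy1 : (y : ℝ) ≤ (C:ℝ) - 1 := by
        have : ((y : ℕ) : ℝ) ≤ ((C - 1 : ℕ) : ℝ) := by
          exact_mod_cast Nat.le_sub_one_of_lt y.isLt
        push_cast [Nat.cast_sub (by omega : 1 ≤ C)] at this
        linarith
      have hx0 : (0:ℝ) ≤ (x : ℝ) := by positivity
      have hy0 : (0:ℝ) ≤ (y : ℝ) := by positivity
      have habs : |(x : ℝ) - (y : ℝ)| ≤ (C:ℝ) - 1 := by
        rw [abs_le]; constructor <;> linarith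
      calc ((x : ℝ) - (y : ℝ)) ^ 2 = |(x : ℝ) - (y : ℝ)| ^ 2 := (sq_abs _).symm
        _ ≤ ((C:ℝ)-1)^2 := by
            apply pow_le_pow_left₀ (abs_nonneg _) habs
  have hmb : 0 ≤ m ∧ m ≤ ((C:ℝ)-1)^2 := by
    constructor
    · rw [hm]; nlinarith
    · rw [hm]; nlinarith
  have habs1 : ∀ x y : Fin C, |s * (((x : ℝ) - (y : ℝ)) ^ 2 - m)| ≤ 1 := by
    intro x y
    obtain ⟨hY0, hYle⟩ := hYb x y
    have h1 : |((x : ℝ) - (y : ℝ)) ^ 2 - m| ≤ ((C:ℝ)-1)^2 := by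
      rw [abs_le]; constructor <;> [linarith [hmb.2]; linarith [hmb.1]]
    calc |s * (((x : ℝ) - (y : ℝ)) ^ 2 - m)| = |s| * |((x : ℝ) - (y : ℝ)) ^ 2 - m| := abs_mul _ _
      _ ≤ (3 / (C:ℝ)^4) * ((C:ℝ)-1)^2 := by
          apply mul_le_mul hs h1 (abs_nonneg _) (by positivity)
      _ ≤ 1 := by
          rw [div_mul_eq_mul_div, div_le_one (by positivity)]
          nlinarith
  -- termwise bound then sum
  have hterm : ∀ x y : Fin C,
      Real.exp (s * (((x : ℝ) - (y : ℝ)) ^ 2 - m))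
        ≤ 1 + s * (((x : ℝ) - (y : ℝ)) ^ 2 - m) + s^2 * (((x : ℝ) - (y : ℝ)) ^ 2 - m)^2 := by
    intro x y
    have := amsExp_quadratic (habs1 x y)
    calc Real.exp (s * (((x : ℝ) - (y : ℝ)) ^ 2 - m))
        ≤ 1 + s * (((x : ℝ) - (y : ℝ)) ^ 2 - m) + (s * (((x : ℝ) - (y : ℝ)) ^ 2 - m))^2 := this
      _ = 1 + s * (((x : ℝ) - (y : ℝ)) ^ 2 - m) + s^2 * (((x : ℝ) - (y : ℝ)) ^ 2 - m)^2 := by ring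
  have hsum : ∑ x : Fin C, ∑ y : Fin C, Real.exp (s * (((x : ℝ) - (y : ℝ)) ^ 2 - m))
      ≤ ∑ x : Fin C, ∑ y : Fin C,
        (1 + s * (((x : ℝ) - (y : ℝ)) ^ 2 - m) + s^2 * (((x : ℝ) - (y : ℝ)) ^ 2 - m)^2) :=
    sum_le_sum fun x _ => sum_le_sum fun y _ => hterm x y
  -- compute the RHS sum
  have hlin : ∑ x : Fin C, ∑ y : Fin C, (((x : ℝ) - (y : ℝ)) ^ 2 - m) = 0 := by
    simp_rw [sum_sub_distrib, sum_const, card_univ, Fintype.card_fin, nsmul_eq_mul]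
    rw [amsMean C, hm]
    ring
  have hquad : ∑ x : Fin C, ∑ y : Fin C, (((x : ℝ) - (y : ℝ)) ^ 2 - m)^2 ≤ (C:ℝ)^6 / 6 := by
    have h1 : ∀ x y : Fin C, (((x : ℝ) - (y : ℝ)) ^ 2 - m)^2
        ≤ ((C:ℝ)-1)^2 * ((x : ℝ) - (y : ℝ)) ^ 2 - 2 * m * ((x : ℝ) - (y : ℝ)) ^ 2 + m^2 := by
      intro x y
      obtain ⟨hY0, hYle⟩ := hYb x y
      nlinarith
    calc ∑ x : Fin C, ∑ y : Fin C, (((x : ℝ) - (y : ℝ)) ^ 2 - m)^2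
        ≤ ∑ x : Fin C, ∑ y : Fin C,
            (((C:ℝ)-1)^2 * ((x : ℝ) - (y : ℝ)) ^ 2 - 2 * m * ((x : ℝ) - (y : ℝ)) ^ 2 + m^2) :=
          sum_le_sum fun x _ => sum_le_sum fun y _ => h1 x y
      _ = ((C:ℝ)-1)^2 * ((C : ℝ) ^ 2 * ((C : ℝ) ^ 2 - 1) / 6)
            - 2 * m * ((C : ℝ) ^ 2 * ((C : ℝ) ^ 2 - 1) / 6) + (C:ℝ)^2 * m^2 := by
          simp_rw [sum_add_distrib, sum_sub_distrib, ← mul_sum, sum_const, card_univ,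
            Fintype.card_fin, nsmul_eq_mul]
          rw [amsMean C]
          ring
      _ ≤ (C:ℝ)^6 / 6 := by rw [hm]; nlinarith
  have e1 : ∑ x : Fin C, ∑ y : Fin C,
      (1 + s * (((x : ℝ) - (y : ℝ)) ^ 2 - m) + s^2 * (((x : ℝ) - (y : ℝ)) ^ 2 - m)^2)
      = (C:ℝ)^2 + s * (∑ x : Fin C, ∑ y : Fin C, (((x : ℝ) - (y : ℝ)) ^ 2 - m))
        + s^2 * (∑ x : Fin C, ∑ y : Fin C, (((x : ℝ) - (y : ℝ)) ^ 2 - m)^2) := by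
    simp only [sum_add_distrib, sum_const, card_univ, Fintype.card_fin, nsmul_eq_mul,
      ← mul_sum]
    push_cast
    ring
  have hs2 : s^2 * (∑ x : Fin C, ∑ y : Fin C, (((x : ℝ) - (y : ℝ)) ^ 2 - m)^2)
      ≤ 3 / (2 * (C:ℝ)^2) := by
    have hq0 : (0:ℝ) ≤ ∑ x : Fin C, ∑ y : Fin C, (((x : ℝ) - (y : ℝ)) ^ 2 - m)^2 :=
      sum_nonneg fun x _ => sum_nonneg fun y _ => sq_nonneg _
    have h1 : s^2 * (∑ x : Fin C, ∑ y : Fin C, (((x : ℝ) - (y : ℝ)) ^ 2 - m)^2)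
        ≤ (9/(C:ℝ)^8) * ((C:ℝ)^6/6) := by
      apply mul_le_mul _ hquad hq0 (by positivity)
      calc s^2 = |s|^2 := (sq_abs s).symm
        _ ≤ (3/(C:ℝ)^4)^2 := pow_le_pow_left₀ (abs_nonneg _) hs 2
        _ = 9/(C:ℝ)^8 := by field_simp; ring
    have h2 : (9:ℝ)/(C:ℝ)^8 * ((C:ℝ)^6/6) = 3/(2*(C:ℝ)^2) := by field_simp; ring
    linarith
  have hfin : ∑ x : Fin C, ∑ y : Fin C, Real.exp (s * (((x : ℝ) - (y : ℝ)) ^ 2 - m))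
      ≤ (C:ℝ)^2 + 3 / (2 * (C:ℝ)^2) := by
    rw [e1, hlin] at hsum
    linarith
  have h10 : (C:ℝ)^2 * (1 + 3/(2*(C:ℝ)^4)) = (C:ℝ)^2 + 3/(2*(C:ℝ)^2) := by
    field_simp
  calc ∑ x : Fin C, ∑ y : Fin C, Real.exp (s * (((x : ℝ) - (y : ℝ)) ^ 2 - m))
      ≤ (C:ℝ)^2 * (1 + 3/(2*(C:ℝ)^4)) := by rw [h10]; exact hfin
    _ ≤ (C:ℝ)^2 * Real.exp (3 / (2 * (C:ℝ)^4)) := by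
        apply mul_le_mul_of_nonneg_left _ (by positivity)
        have := Real.add_one_le_exp (3 / (2 * (C:ℝ)^4))
        linarith

lemma amsFactor {n : ℕ} {β : Type*} [Fintype β] (F : β → β → ℝ) :
    ∑ a : Fin n → β, ∑ b : Fin n → β, ∏ i, F (a i) (b i)
      = (∑ x : β, ∑ y : β, F x y) ^ n := by
  classical
  have inner : ∀ a : Fin n → β, ∑ b : Fin n → β, ∏ i, F (a i) (b i)
      = ∏ i, ∑ y : β, F (a i) y := by
    intro a
    rw [Finset.prod_univ_sum (fun _ => (univ : Finset β)) (fun i y => F (a i) y)]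
    rw [Fintype.piFinset_univ]
  calc ∑ a : Fin n → β, ∑ b : Fin n → β, ∏ i, F (a i) (b i)
      = ∑ a : Fin n → β, ∏ i, (fun x => ∑ y : β, F x y) (a i) := by
        exact sum_congr rfl fun a _ => inner a
    _ = ∏ _i : Fin n, ∑ x : β, ∑ y : β, F x y := by
        rw [Finset.prod_univ_sum (fun _ => (univ : Finset β))
          (fun _i x => ∑ y : β, F x y), Fintype.piFinset_univ]
    _ = (∑ x : β, ∑ y : β, F x y) ^ n := by
        rw [prod_const, card_univ, Fintype.card_fin]

lemma amsBadCount (C n : ℕ) (hC : 2 ≤ C) (hn : C^4 ≤ n) :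
    (Nat.card {p : (Fin n → Fin C) × (Fin n → Fin C) //
        p.1 ≠ p.2 ∧ ¬ (amsGraph C n).Adj p.1 p.2} : ℝ)
      ≤ (C:ℝ)^(2*n) * Real.exp (- (n:ℝ) / (2*(C:ℝ)^4)) := by
  classical
  set t : ℝ := 3/(C:ℝ)^4 with ht
  have hCpos : (0:ℝ) < C := by positivity
  have htpos : 0 < t := by positivity
  set m : ℝ := ((C:ℝ)^2 - 1) / 6 with hm
  set X : (Fin n → Fin C) × (Fin n → Fin C) → ℝ :=
    fun p => ∑ i, ((p.1 i : ℝ) - (p.2 i : ℝ)) ^ 2 with hX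
  set μ : ℝ := (n : ℝ) * ((C:ℝ)^2 - 1) / 6 with hμ
  have hμm : μ = (n:ℝ) * m := by rw [hμ, hm]; ring
  set f : (Fin n → Fin C) × (Fin n → Fin C) → ℝ :=
    fun p => Real.exp (t * (X p - μ - n)) + Real.exp (t * (μ - n - X p)) with hf
  have hf0 : ∀ p, 0 ≤ f p := fun p => by positivity
  set B : Finset ((Fin n → Fin C) × (Fin n → Fin C)) :=
    univ.filter (fun p => p.1 ≠ p.2 ∧ ¬ (amsGraph C n).Adj p.1 p.2) with hB
  have hcard : (Nat.card {p : (Fin n → Fin C) × (Fin n → Fin C) //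
      p.1 ≠ p.2 ∧ ¬ (amsGraph C n).Adj p.1 p.2}) = B.card := by
    rw [Nat.card_eq_fintype_card, Fintype.card_subtype]
  have hpoint : ∀ p ∈ B, (1:ℝ) ≤ f p := by
    intro p hp
    rw [hB, mem_filter] at hp
    obtain ⟨-, hne, hnadj⟩ := hp
    have habs : (n:ℝ) ≤ |X p - μ| := by
      by_contra hlt
      push_neg at hlt
      exact hnadj (show _ ∧ _ from ⟨hne, hlt⟩)
    rcases le_abs.mp habs with h | h
    · have : 0 ≤ t * (X p - μ - n) := by
        apply mul_nonneg htpos.le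
        linarith
      have h1 := Real.one_le_exp this
      have h2 : 0 ≤ Real.exp (t * (μ - n - X p)) := (Real.exp_pos _).le
      rw [hf]
      dsimp only
      linarith
    · have : 0 ≤ t * (μ - n - X p) := by
        apply mul_nonneg htpos.le
        linarith
      have h1 := Real.one_le_exp this
      have h2 : 0 ≤ Real.exp (t * (X p - μ - n)) := (Real.exp_pos _).le
      rw [hf]
      dsimp only
      linarith
  have hstep1 : (B.card : ℝ) ≤ ∑ p : (Fin n → Fin C) × (Fin n → Fin C), f p := by
    calc (B.card : ℝ) = ∑ _p ∈ B, (1:ℝ) := by rw [sum_const, nsmul_eq_mul, mul_one]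
      _ ≤ ∑ p ∈ B, f p := sum_le_sum hpoint
      _ ≤ ∑ p : (Fin n → Fin C) × (Fin n → Fin C), f p :=
          sum_le_sum_of_subset_of_nonneg (subset_univ B) (fun p _ _ => hf0 p)
  -- Chernoff: handle the two exponential sums
  have hX_split : ∀ (s : ℝ) (p : (Fin n → Fin C) × (Fin n → Fin C)),
      Real.exp (s * (X p - μ)) = ∏ i, Real.exp (s * (((p.1 i : ℝ) - (p.2 i : ℝ))^2 - m)) := by
    intro s p
    rw [← Real.exp_sum]
    congr 1
    rw [hX]
    dsimp only
    rw [← mul_sum, sum_sub_distrib, sum_const, card_univ, Fintype.card_fin, nsmul_eq_mul, hμm]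
  have hchernoff : ∀ s : ℝ, |s| ≤ 3 / (C:ℝ)^4 →
      ∑ p : (Fin n → Fin C) × (Fin n → Fin C), Real.exp (s * (X p - μ))
        ≤ ((C:ℝ)^2 * Real.exp (3 / (2 * (C:ℝ)^4)))^n := by
    intro s hs
    have := amsFactor (n := n) (fun x y : Fin C =>
      Real.exp (s * (((x : ℝ) - (y : ℝ))^2 - m)))
    calc ∑ p : (Fin n → Fin C) × (Fin n → Fin C), Real.exp (s * (X p - μ))
        = ∑ p : (Fin n → Fin C) × (Fin n → Fin C),
            ∏ i, Real.exp (s * (((p.1 i : ℝ) - (p.2 i : ℝ))^2 - m)) :=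
          sum_congr rfl fun p _ => hX_split s p
      _ = ∑ a : Fin n → Fin C, ∑ b : Fin n → Fin C,
            ∏ i, Real.exp (s * (((a i : ℝ) - (b i : ℝ))^2 - m)) := Fintype.sum_prod_type _
      _ = (∑ x : Fin C, ∑ y : Fin C, Real.exp (s * (((x : ℝ) - (y : ℝ))^2 - m))) ^ n := this
      _ ≤ ((C:ℝ)^2 * Real.exp (3 / (2 * (C:ℝ)^4)))^n := by
          apply pow_le_pow_left₀ _ _ n
          · exact sum_nonneg fun x _ => sum_nonneg fun y _ => (Real.exp_pos _).le
          · rw [hm]; exact amsMgf C hC s hs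
  have habs_t : |t| ≤ 3 / (C:ℝ)^4 := by rw [ht, abs_of_pos htpos]
  have habs_t' : |(-t)| ≤ 3 / (C:ℝ)^4 := by rw [abs_neg, abs_of_pos htpos]
  have hsum_f : ∑ p : (Fin n → Fin C) × (Fin n → Fin C), f p
      ≤ 2 * Real.exp (-(t*n)) * ((C:ℝ)^2 * Real.exp (3 / (2 * (C:ℝ)^4)))^n := by
    have e1 : ∀ p, Real.exp (t * (X p - μ - n))
        = Real.exp (-(t*n)) * Real.exp (t * (X p - μ)) := by
      intro p
      rw [← Real.exp_add]
      congr 1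
      ring
    have e2 : ∀ p, Real.exp (t * (μ - n - X p))
        = Real.exp (-(t*n)) * Real.exp ((-t) * (X p - μ)) := by
      intro p
      rw [← Real.exp_add]
      congr 1
      ring
    rw [hf]
    dsimp only
    rw [sum_add_distrib]
    have c1 : ∑ p : (Fin n → Fin C) × (Fin n → Fin C), Real.exp (t * (X p - μ - n))
        ≤ Real.exp (-(t*n)) * ((C:ℝ)^2 * Real.exp (3 / (2 * (C:ℝ)^4)))^n := by
      rw [sum_congr rfl fun p _ => e1 p, ← mul_sum]
      exact mul_le_mul_of_nonneg_left (hchernoff t habs_t) (Real.exp_pos _).le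
    have c2 : ∑ p : (Fin n → Fin C) × (Fin n → Fin C), Real.exp (t * (μ - n - X p))
        ≤ Real.exp (-(t*n)) * ((C:ℝ)^2 * Real.exp (3 / (2 * (C:ℝ)^4)))^n := by
      rw [sum_congr rfl fun p _ => e2 p, ← mul_sum]
      exact mul_le_mul_of_nonneg_left (hchernoff (-t) habs_t') (Real.exp_pos _).le
    linarith
  -- final numeric assembly
  have hfinal : 2 * Real.exp (-(t*n)) * ((C:ℝ)^2 * Real.exp (3 / (2 * (C:ℝ)^4)))^n
      ≤ (C:ℝ)^(2*n) * Real.exp (- (n:ℝ) / (2*(C:ℝ)^4)) := by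
    rw [mul_pow, ← Real.exp_nat_mul]
    have hpow : ((C:ℝ)^2)^n = (C:ℝ)^(2*n) := by rw [← pow_mul]
    rw [hpow]
    rw [show (2:ℝ) * Real.exp (-(t*n)) * ((C:ℝ)^(2*n) * Real.exp ((n:ℕ) * (3 / (2 * (C:ℝ)^4))))
        = (C:ℝ)^(2*n) * (2 * (Real.exp (-(t*n)) * Real.exp ((n:ℕ) * (3 / (2 * (C:ℝ)^4))))) by ring]
    apply mul_le_mul_of_nonneg_left _ (by positivity)
    rw [← Real.exp_add]
    have harg : -(t*n) + (n:ℕ) * (3 / (2 * (C:ℝ)^4))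
        = - (n:ℝ) / (2*(C:ℝ)^4) + (- (n:ℝ) / ((C:ℝ)^4)) := by
      rw [ht]
      field_simp
      ring
    rw [harg, Real.exp_add]
    have hncast : (C:ℝ)^4 ≤ (n:ℝ) := by exact_mod_cast hn
    have hE2 : Real.exp (-(n:ℝ)/(C:ℝ)^4) ≤ 1/2 := by
      have h1 : (-(n:ℝ)/(C:ℝ)^4) ≤ -1 := by
        have h2 : (1:ℝ) ≤ (n:ℝ)/(C:ℝ)^4 := (one_le_div (by positivity)).mpr hncast
        rw [neg_div]
        linarith
      have h2 : (2:ℝ) ≤ Real.exp 1 := by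
        have := Real.add_one_le_exp 1
        linarith
      calc Real.exp (-(n:ℝ)/(C:ℝ)^4) ≤ Real.exp (-1) := Real.exp_le_exp.mpr h1
        _ = (Real.exp 1)⁻¹ := Real.exp_neg 1
        _ ≤ 1/2 := by
            rw [inv_eq_one_div]
            exact one_div_le_one_div_of_le (by norm_num) h2
    nlinarith [Real.exp_pos (-(n:ℝ) / (2*(C:ℝ)^4)), Real.exp_pos (-(n:ℝ)/(C:ℝ)^4)]
  rw [hcard]
  calc (B.card : ℝ) ≤ ∑ p : (Fin n → Fin C) × (Fin n → Fin C), f p := hstep1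
    _ ≤ 2 * Real.exp (-(t*n)) * ((C:ℝ)^2 * Real.exp (3 / (2 * (C:ℝ)^4)))^n := hsum_f
    _ ≤ (C:ℝ)^(2*n) * Real.exp (- (n:ℝ) / (2*(C:ℝ)^4)) := hfinal

lemma amsIccExp (m : ℕ) :
    ∑ j ∈ Finset.Icc (-(m:ℤ)) (m:ℤ), Real.exp (-((j:ℝ))^2) ≤ 3 - 2*(1/2:ℝ)^m := by
  induction m with
  | zero => norm_num
  | succ k ih =>
    have hsplit : Finset.Icc (-((k+1:ℕ):ℤ)) ((k+1:ℕ):ℤ)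
        = insert (-((k+1:ℕ):ℤ)) (insert (((k+1:ℕ):ℤ)) (Finset.Icc (-(k:ℤ)) (k:ℤ))) := by
      ext j
      simp only [Finset.mem_Icc, Finset.mem_insert]
      push_cast
      omega
    have h1 : (-((k+1:ℕ):ℤ)) ∉ insert (((k+1:ℕ):ℤ)) (Finset.Icc (-(k:ℤ)) (k:ℤ)) := by
      simp only [Finset.mem_insert, Finset.mem_Icc]
      push_cast
      omega
    have h2 : (((k+1:ℕ):ℤ)) ∉ Finset.Icc (-(k:ℤ)) (k:ℤ) := by
      simp only [Finset.mem_Icc]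
      push_cast
      omega
    rw [hsplit, Finset.sum_insert h1, Finset.sum_insert h2]
    have hterm2 : Real.exp (-((k:ℝ)+1)^2) ≤ (1/2:ℝ)^(k+1) := by
      have e1 : Real.exp (-((k:ℝ)+1)^2) ≤ Real.exp (-((k:ℝ)+1)) := by
        apply Real.exp_le_exp.mpr
        nlinarith [Nat.cast_nonneg (α := ℝ) k]
      have e2 : Real.exp (-((k:ℝ)+1)) = (Real.exp 1)⁻¹ ^ (k+1) := by
        rw [← Real.exp_neg, ← Real.exp_nat_mul]
        congr 1
        push_cast
        ring
      have e3 : (Real.exp 1)⁻¹ ^ (k+1) ≤ (1/2:ℝ)^(k+1) := by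
        apply pow_le_pow_left₀ (by positivity)
        have h2 : (2:ℝ) ≤ Real.exp 1 := by
          have := Real.add_one_le_exp 1
          linarith
        rw [inv_eq_one_div]
        exact one_div_le_one_div_of_le (by norm_num) h2
      calc Real.exp (-((k:ℝ)+1)^2) ≤ Real.exp (-((k:ℝ)+1)) := e1
        _ = (Real.exp 1)⁻¹ ^ (k+1) := e2
        _ ≤ (1/2:ℝ)^(k+1) := e3
    have ha : Real.exp (-((((-((k+1:ℕ):ℤ)):ℤ)):ℝ)^2) ≤ (1/2:ℝ)^(k+1) := by
      push_cast
      rw [neg_sq]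
      exact hterm2
    have hb : Real.exp (-((((k+1:ℕ):ℤ)):ℝ)^2) ≤ (1/2:ℝ)^(k+1) := by
      push_cast
      exact hterm2
    have hpow : (1/2:ℝ)^k = 2 * (1/2:ℝ)^(k+1) := by
      rw [pow_succ]
      ring
    push_cast at ha hb ⊢
    linarith

noncomputable def amsBall (C n : ℕ) : Finset (Fin n → ℤ) :=
  (Fintype.piFinset fun _ => Finset.Icc (-(C:ℤ)+1) ((C:ℤ)-1)).filter
    (fun w => ∑ i, (w i)^2 < 2*(n:ℤ))

lemma amsBallCard (C n : ℕ) (hC : 1 ≤ C) :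
    (((amsBall C n)).card : ℝ) ≤ (3 * Real.exp 2)^n := by
  classical
  have hpt : ∀ w ∈ amsBall C n, (1:ℝ) ≤ ∏ i, Real.exp (2 - ((w i : ℤ):ℝ)^2) := by
    intro w hw
    rw [amsBall, mem_filter] at hw
    have hsum : (∑ i, ((w i : ℤ):ℝ)^2) ≤ 2*(n:ℝ) := by
      have := hw.2
      have h2 : ((∑ i, (w i)^2 : ℤ) : ℝ) ≤ ((2*(n:ℤ) : ℤ):ℝ) := by
        exact_mod_cast this.le
      push_cast at h2
      convert h2 using 2
    rw [← Real.exp_sum]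
    apply Real.one_le_exp
    rw [sum_sub_distrib, sum_const, card_univ, Fintype.card_fin, nsmul_eq_mul]
    linarith
  have h1 : ((amsBall C n).card : ℝ) ≤ ∑ w ∈ amsBall C n, ∏ i, Real.exp (2 - ((w i : ℤ):ℝ)^2) := by
    calc ((amsBall C n).card : ℝ) = ∑ _w ∈ amsBall C n, (1:ℝ) := by
          rw [sum_const, nsmul_eq_mul, mul_one]
      _ ≤ _ := sum_le_sum hpt
  have h2 : ∑ w ∈ amsBall C n, ∏ i, Real.exp (2 - ((w i : ℤ):ℝ)^2)
      ≤ ∑ w ∈ (Fintype.piFinset fun _ : Fin n => Finset.Icc (-(C:ℤ)+1) ((C:ℤ)-1)),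
          ∏ i, Real.exp (2 - ((w i : ℤ):ℝ)^2) := by
    apply sum_le_sum_of_subset_of_nonneg (filter_subset _ _)
    intro w _ _
    positivity
  have h3 : ∑ w ∈ (Fintype.piFinset fun _ : Fin n => Finset.Icc (-(C:ℤ)+1) ((C:ℤ)-1)),
      ∏ i, Real.exp (2 - ((w i : ℤ):ℝ)^2)
      = ∏ _i : Fin n, ∑ j ∈ Finset.Icc (-(C:ℤ)+1) ((C:ℤ)-1), Real.exp (2 - ((j:ℤ):ℝ)^2) := by
    rw [Finset.prod_univ_sum]
  have h4 : ∑ j ∈ Finset.Icc (-(C:ℤ)+1) ((C:ℤ)-1), Real.exp (2 - ((j:ℤ):ℝ)^2)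
      ≤ 3 * Real.exp 2 := by
    have hIcc : Finset.Icc (-(C:ℤ)+1) ((C:ℤ)-1)
        = Finset.Icc (-((C-1:ℕ):ℤ)) (((C-1:ℕ)):ℤ) := by
      congr 1 <;> [skip; skip] <;> push_cast [Nat.cast_sub hC] <;> ring
    have : ∀ j : ℤ, Real.exp (2 - ((j:ℤ):ℝ)^2) = Real.exp 2 * Real.exp (-((j:ℝ))^2) := by
      intro j
      rw [sub_eq_add_neg, Real.exp_add]
    rw [hIcc, sum_congr rfl fun j _ => this j, ← mul_sum]
    have := amsIccExp (C-1)
    have hb : ∑ j ∈ Finset.Icc (-((C-1:ℕ):ℤ)) (((C-1:ℕ)):ℤ), Real.exp (-((j:ℝ))^2) ≤ 3 := by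
      have hp : (0:ℝ) ≤ 2*(1/2:ℝ)^(C-1) := by positivity
      linarith
    calc Real.exp 2 * ∑ j ∈ Finset.Icc (-((C-1:ℕ):ℤ)) (((C-1:ℕ)):ℤ), Real.exp (-((j:ℝ))^2)
        ≤ Real.exp 2 * 3 := mul_le_mul_of_nonneg_left hb (Real.exp_pos _).le
      _ = 3 * Real.exp 2 := by ring
  calc ((amsBall C n).card : ℝ) ≤ _ := h1
    _ ≤ _ := h2
    _ = _ := h3
    _ ≤ ∏ _i : Fin n, (3 * Real.exp 2) := by
        apply prod_le_prod
        · intro i _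
          exact sum_nonneg fun j _ => (Real.exp_pos _).le
        · intro i _
          exact h4
    _ = (3 * Real.exp 2)^n := by rw [prod_const, card_univ, Fintype.card_fin]

section PartA
variable (C n : ℕ)

local notation "V" => Fin n → Fin C
local notation "P" => (Fin n → Fin C) × (Fin n → Fin C)

set_option maxHeartbeats 2000000 in
lemma amsPartA (hC : 2 ≤ C) (hn : 24*C^2 ≤ n) :
    ∃ t : ℕ, ∃ M : Fin t → Finset P,
      (t : ℝ) ≤ (C:ℝ)^n * (110.25:ℝ)^n ∧
      (∀ i, (∀ e ∈ M i, (amsGraph C n).Adj e.1 e.2) ∧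
        ∀ e ∈ M i, ∀ f ∈ M i, e ≠ f →
          ¬ (amsGraph C n).Adj e.1 f.1 ∧ ¬ (amsGraph C n).Adj e.1 f.2 ∧
          ¬ (amsGraph C n).Adj e.2 f.1 ∧ ¬ (amsGraph C n).Adj e.2 f.2) ∧
      (∀ a b, (amsGraph C n).Adj a b → ∃ i, (a, b) ∈ M i ∨ (b, a) ∈ M i) ∧
      (∀ i j : Fin t, ∀ a b,
        ((a, b) ∈ M i ∨ (b, a) ∈ M i) → ((a, b) ∈ M j ∨ (b, a) ∈ M j) → i = j) := by
  classical
  set G := amsGraph C n with hG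
  -- basic data
  set df : P → (Fin n → ℤ) := fun e i => ((e.1 i : ℕ) : ℤ) - ((e.2 i : ℕ) : ℤ) with hdf
  set zf : P → (Fin n → ℤ) := fun e i => ((e.1 i : ℕ) : ℤ) + ((e.2 i : ℕ) : ℤ) with hzf
  set kf : P → ℤ := fun e => ∑ i, (df e i)^2 with hkf
  set μ : ℝ := (n : ℝ) * ((C:ℝ)^2 - 1) / 6 with hμ
  have hkf_nonneg : ∀ e : P, 0 ≤ kf e := fun e => sum_nonneg fun i _ => sq_nonneg _
  have hkf_le : ∀ e : P, kf e ≤ (n:ℤ) * ((C:ℤ)-1)^2 := by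
    intro e
    rw [hkf]
    calc ∑ i, (df e i)^2 ≤ ∑ _i : Fin n, ((C:ℤ)-1)^2 := by
          apply sum_le_sum
          intro i _
          have h1 : ((e.1 i : ℕ) : ℤ) ≤ (C:ℤ) - 1 := by
            have := (e.1 i).isLt; omega
          have h2 : ((e.2 i : ℕ) : ℤ) ≤ (C:ℤ) - 1 := by
            have := (e.2 i).isLt; omega
          have h3 : (0:ℤ) ≤ ((e.1 i : ℕ) : ℤ) := Int.ofNat_nonneg _
          have h4 : (0:ℤ) ≤ ((e.2 i : ℕ) : ℤ) := Int.ofNat_nonneg _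
          have : |df e i| ≤ (C:ℤ) - 1 := by
            rw [hdf, abs_le]; constructor <;> simp only <;> omega
          calc (df e i)^2 = |df e i|^2 := (sq_abs _).symm
            _ ≤ ((C:ℤ)-1)^2 := by
                apply pow_le_pow_left₀ (abs_nonneg _) this
      _ = (n:ℤ) * ((C:ℤ)-1)^2 := by rw [sum_const, card_univ, Fintype.card_fin, nsmul_eq_mul]
  -- real-valued distance of an edge equals cast of kf
  have hdist : ∀ e : P, (∑ i, ((e.1 i : ℝ) - (e.2 i : ℝ)) ^ 2) = ((kf e : ℤ) : ℝ) := by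
    intro e
    simp only [hkf, hdf]
    push_cast
    rfl
  -- similar for arbitrary pairs u v
  have hdist2 : ∀ u v : V, (∑ i, ((u i : ℝ) - (v i : ℝ)) ^ 2)
      = ((∑ i, (((u i : ℕ) : ℤ) - ((v i : ℕ) : ℤ))^2 : ℤ) : ℝ) := by
    intro u v
    push_cast
    rfl
  set cross : P → P → Prop := fun e f =>
    G.Adj e.1 f.1 ∨ G.Adj e.1 f.2 ∨ G.Adj e.2 f.1 ∨ G.Adj e.2 f.2 with hcross
  set rel : P → P → Prop := fun e f =>
    e ≠ f ∧ G.Adj e.1 e.2 ∧ G.Adj f.1 f.2 ∧ zf e = zf f ∧ kf e = kf f ∧ cross e f with hrel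
  have hsymm : ∀ e f, rel e f → rel f e := by
    rintro e f ⟨hne, he, hf, hz, hk, hc⟩
    refine ⟨hne.symm, hf, he, hz.symm, hk.symm, ?_⟩
    rw [hcross] at hc ⊢
    rcases hc with h | h | h | h
    · exact Or.inl h.symm
    · exact Or.inr (Or.inr (Or.inl h.symm))
    · exact Or.inr (Or.inl h.symm)
    · exact Or.inr (Or.inr (Or.inr h.symm))
  -- KEY: a conflict forces one of two small difference vectors
  have hkey : ∀ e f : P, rel e f →
      (fun i => ((e.1 i : ℕ) : ℤ) - ((f.1 i : ℕ) : ℤ)) ∈ amsBall C n ∨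
      (fun i => df e i - (((e.1 i : ℕ) : ℤ) - ((f.1 i : ℕ) : ℤ))) ∈ amsBall C n := by
    rintro e f ⟨hne, he, hf, hz, hk, hc⟩
    set w : Fin n → ℤ := fun i => ((e.1 i : ℕ) : ℤ) - ((f.1 i : ℕ) : ℤ) with hw
    set p : Fin n → ℤ := fun i => ((e.1 i : ℕ) : ℤ) - ((f.2 i : ℕ) : ℤ) with hp
    have hzi : ∀ i, ((e.1 i : ℕ) : ℤ) + ((e.2 i : ℕ) : ℤ)
        = ((f.1 i : ℕ) : ℤ) + ((f.2 i : ℕ) : ℤ) := by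
      intro i
      have := congrFun hz i
      simpa [hzf] using this
    have hp_alt : ∀ i, p i = ((f.1 i : ℕ) : ℤ) - ((e.2 i : ℕ) : ℤ) := by
      intro i
      have := hzi i
      simp only [hp]
      omega
    have hd_e : ∀ i, df e i = p i + w i := by
      intro i
      have := hzi i
      simp only [hdf, hp, hw]
      omega
    have hd_f : ∀ i, df f i = p i - w i := by
      intro i
      have := hzi i
      simp only [hdf, hp, hw]
      omega
    have hkk : ∑ i, (p i + w i)^2 = ∑ i, (p i - w i)^2 := by
      calc ∑ i, (p i + w i)^2 = ∑ i, (df e i)^2 :=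
            sum_congr rfl fun i _ => by rw [hd_e i]
        _ = kf e := by rw [hkf]
        _ = kf f := hk
        _ = ∑ i, (p i - w i)^2 := by
            rw [hkf]
            exact sum_congr rfl fun i _ => by rw [hd_f i]
    have horth : ∑ i, p i * w i = 0 := by
      have h4 : ∑ i, ((p i + w i)^2 - (p i - w i)^2) = 0 := by
        rw [sum_sub_distrib, hkk, sub_self]
      have h5 : ∑ i, ((p i + w i)^2 - (p i - w i)^2) = 4 * ∑ i, p i * w i := by
        rw [mul_sum]
        exact sum_congr rfl fun i _ => by ring
      rw [h5] at h4
      linarith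
    have hpyth : kf e = (∑ i, (p i)^2) + (∑ i, (w i)^2) := by
      have : ∀ i, (p i + w i)^2 = (p i)^2 + (w i)^2 + 2 * (p i * w i) := fun i => by ring
      calc kf e = ∑ i, (p i + w i)^2 := by
            rw [hkf]; exact sum_congr rfl fun i _ => by rw [hd_e i]
        _ = (∑ i, (p i)^2) + (∑ i, (w i)^2) + 2 * ∑ i, p i * w i := by
            rw [sum_congr rfl fun i _ => this i, sum_add_distrib, sum_add_distrib, ← mul_sum]
        _ = (∑ i, (p i)^2) + (∑ i, (w i)^2) := by rw [horth]; ring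
    -- the edge e is in the window
    have hewin : |((kf e : ℤ) : ℝ) - μ| < (n:ℝ) := by
      have := (show _ ∧ _ from he).2
      rw [hdist e] at this
      rw [hμ]
      exact this
    -- coordinate ranges for p and w
    have hwrange : ∀ i, w i ∈ Finset.Icc (-(C:ℤ)+1) ((C:ℤ)-1) := by
      intro i
      simp only [hw, Finset.mem_Icc]
      have h1 := (e.1 i).isLt
      have h2 := (f.1 i).isLt
      omega
    have hprange : ∀ i, p i ∈ Finset.Icc (-(C:ℤ)+1) ((C:ℤ)-1) := by
      intro i
      simp only [hp, Finset.mem_Icc]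
      have h1 := (e.1 i).isLt
      have h2 := (f.2 i).isLt
      omega
    -- from the cross adjacency, one of ‖w‖², ‖p‖² is in the window
    have hwin : |((∑ i, (w i)^2 : ℤ) : ℝ) - μ| < (n:ℝ) ∨
        |((∑ i, (p i)^2 : ℤ) : ℝ) - μ| < (n:ℝ) := by
      have cast_eq : ∀ (u v : V) (g : Fin n → ℤ),
          (∀ i, ((u i : ℕ) : ℤ) - ((v i : ℕ) : ℤ) = g i ∨
                ((u i : ℕ) : ℤ) - ((v i : ℕ) : ℤ) = - g i) →
          (∑ i, ((u i : ℝ) - (v i : ℝ)) ^ 2) = ((∑ i, (g i)^2 : ℤ) : ℝ) := by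
        intro u v g hg
        rw [hdist2 u v]
        congr 1
        apply sum_congr rfl
        intro i _
        rcases hg i with h | h <;> rw [h] <;> ring
      rw [hcross] at hc
      rcases hc with h | h | h | h
      · left
        have := (show _ ∧ _ from h).2
        rw [cast_eq e.1 f.1 w (fun i => Or.inl rfl)] at this
        rw [hμ]; exact this
      · right
        have := (show _ ∧ _ from h).2
        rw [cast_eq e.1 f.2 p (fun i => Or.inl rfl)] at this
        rw [hμ]; exact this
      · right
        have := (show _ ∧ _ from h).2
        have halt : ∀ i, ((e.2 i : ℕ) : ℤ) - ((f.1 i : ℕ) : ℤ) = - p i := by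
          intro i
          rw [hp_alt i]; ring
        rw [cast_eq e.2 f.1 p (fun i => Or.inr (halt i))] at this
        rw [hμ]; exact this
      · left
        have := (show _ ∧ _ from h).2
        have halt : ∀ i, ((e.2 i : ℕ) : ℤ) - ((f.2 i : ℕ) : ℤ) = - w i := by
          intro i
          have := hzi i
          simp only [hw]; omega
        rw [cast_eq e.2 f.2 w (fun i => Or.inr (halt i))] at this
        rw [hμ]; exact this
    -- conclude
    have hsum_cast : ((kf e : ℤ) : ℝ) = ((∑ i, (p i)^2 : ℤ) : ℝ) + ((∑ i, (w i)^2 : ℤ) : ℝ) := by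
      rw [hpyth]; push_cast; ring
    rcases hwin with h | h
    · -- ‖w‖² in window ⇒ p small ⇒ second disjunct
      right
      have hps : (∑ i, (p i)^2 : ℤ) < 2*(n:ℤ) := by
        have h1 : ((∑ i, (p i)^2 : ℤ) : ℝ) < 2*(n:ℝ) := by
          rw [abs_lt] at h hewin
          rw [hsum_cast] at hewin
          linarith [hewin.2, h.1]
        exact_mod_cast h1
      have hmem : p ∈ amsBall C n := by
        rw [amsBall, mem_filter]
        exact ⟨Fintype.mem_piFinset.mpr hprange, hps⟩
      have heq : (fun i => df e i - (((e.1 i : ℕ) : ℤ) - ((f.1 i : ℕ) : ℤ))) = p := by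
        funext i
        rw [hd_e i]
        simp only [hp, hw]
        ring
      rw [heq]
      exact hmem
    · left
      have hws : (∑ i, (w i)^2 : ℤ) < 2*(n:ℤ) := by
        have h1 : ((∑ i, (w i)^2 : ℤ) : ℝ) < 2*(n:ℝ) := by
          rw [abs_lt] at h hewin
          rw [hsum_cast] at hewin
          linarith [hewin.2, h.1]
        exact_mod_cast h1
      rw [amsBall, mem_filter]
      exact ⟨Fintype.mem_piFinset.mpr hwrange, hws⟩
  -- degree bound for the conflict relation
  have hdeg : ∀ e : P, (univ.filter (rel e)).card ≤ 2 * (amsBall C n).card := by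
    intro e
    set φ : P → (Fin n → ℤ) := fun f i => ((e.1 i : ℕ) : ℤ) - ((f.1 i : ℕ) : ℤ) with hφ
    have hinj : Set.InjOn φ (univ.filter (rel e)) := by
      intro f hfm g hgm hfg
      have hz_f : zf f = zf e := by
        rw [mem_coe, mem_filter] at hfm
        exact (hfm.2.2.2.2.1).symm
      have hz_g : zf g = zf e := by
        rw [mem_coe, mem_filter] at hgm
        exact (hgm.2.2.2.2.1).symm
      have h1 : f.1 = g.1 := by
        funext i
        have := congrFun hfg i
        simp only [hφ] at this
        have hval : ((f.1 i : ℕ) : ℤ) = ((g.1 i : ℕ) : ℤ) := by omega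
        have : (f.1 i : ℕ) = (g.1 i : ℕ) := by exact_mod_cast hval
        exact Fin.ext this
      have h2 : f.2 = g.2 := by
        funext i
        have hzfi := congrFun hz_f i
        have hzgi := congrFun hz_g i
        simp only [hzf] at hzfi hzgi
        have h1i := congrFun h1 i
        have hval : ((f.2 i : ℕ) : ℤ) = ((g.2 i : ℕ) : ℤ) := by
          have : ((f.1 i : ℕ) : ℤ) = ((g.1 i : ℕ) : ℤ) := by rw [h1i]
          omega
        have : (f.2 i : ℕ) = (g.2 i : ℕ) := by exact_mod_cast hval
        exact Fin.ext this
      exact Prod.ext h1 h2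
    have hmaps : ∀ f ∈ univ.filter (rel e), φ f ∈
        amsBall C n ∪ (amsBall C n).image (fun v : Fin n → ℤ => fun i => df e i - v i) := by
      intro f hfm
      rw [mem_filter] at hfm
      rcases hkey e f hfm.2 with h | h
      · exact mem_union_left _ h
      · apply mem_union_right
        apply mem_image.mpr
        refine ⟨(fun i => df e i - (((e.1 i : ℕ) : ℤ) - ((f.1 i : ℕ) : ℤ))), h, ?_⟩
        funext i
        simp only [hφ]
        ring
    calc (univ.filter (rel e)).card
        = ((univ.filter (rel e)).image φ).card := (card_image_of_injOn hinj).symm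
      _ ≤ (amsBall C n ∪ (amsBall C n).image (fun v : Fin n → ℤ => fun i => df e i - v i)).card := by
          apply card_le_card
          intro x hx
          rw [mem_image] at hx
          obtain ⟨f, hf, rfl⟩ := hx
          exact hmaps f hf
      _ ≤ (amsBall C n).card + ((amsBall C n).image (fun v : Fin n → ℤ => fun i => df e i - v i)).card :=
          card_union_le (amsBall C n) ((amsBall C n).image (fun v : Fin n → ℤ => fun i => df e i - v i))
      _ ≤ (amsBall C n).card + (amsBall C n).card :=
          Nat.add_le_add_left (card_image_le) _
      _ = 2 * (amsBall C n).card := by ring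
  -- greedy coloring
  set Ncol : ℕ := 2 * (amsBall C n).card + 1 with hNcol
  obtain ⟨c, hc⟩ := exists_greedy_coloring rel hsymm Ncol
    (fun e => lt_of_le_of_lt (hdeg e) (by omega))
  -- index structure
  set encV := Fintype.equivFin (Fin n → Fin C) with hencV
  have hzlt : ∀ (e : P) (i : Fin n), (e.1 i : ℕ) + (e.2 i : ℕ) < 2*C - 1 := by
    intro e i
    have h1 := (e.1 i).isLt
    have h2 := (e.2 i).isLt
    omega
  have hklt : ∀ e : P, (kf e).toNat < n * (C-1)^2 + 1 := by
    intro e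
    have h1 := hkf_le e
    have h2 := hkf_nonneg e
    have : (kf e).toNat ≤ n * (C-1)^2 := by
      rw [Int.toNat_le]
      calc kf e ≤ (n:ℤ) * ((C:ℤ)-1)^2 := h1
        _ = ((n * (C-1)^2 : ℕ) : ℤ) := by
            push_cast [Nat.cast_sub (by omega : 1 ≤ C)]
            ring
    omega
  set I := (Fin n → Fin (2*C-1)) × Fin (n*(C-1)^2+1) × Fin Ncol with hI
  set eI := Fintype.equivFin I with heI
  set idx : P → I :=
    fun e => (fun i => ⟨(e.1 i : ℕ) + (e.2 i : ℕ), hzlt e i⟩, ⟨(kf e).toNat, hklt e⟩, c e)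
    with hidx
  have hidx_z : ∀ e f : P, idx e = idx f → zf e = zf f := by
    intro e f h
    funext i
    have := congrFun (congrArg Prod.fst h) i
    simp only [hidx] at this
    have hval : (e.1 i : ℕ) + (e.2 i : ℕ) = (f.1 i : ℕ) + (f.2 i : ℕ) := by
      exact congrArg Fin.val this
    simp only [hzf]
    omega
  have hidx_k : ∀ e f : P, idx e = idx f → kf e = kf f := by
    intro e f h
    have h2 := congrArg (fun q => q.2.1) h
    simp only [hidx] at h2
    have hval : (kf e).toNat = (kf f).toNat := congrArg Fin.val h2
    have := hkf_nonneg e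
    have := hkf_nonneg f
    omega
  have hidx_c : ∀ e f : P, idx e = idx f → c e = c f := by
    intro e f h
    have h2 := congrArg (fun q => q.2.2) h
    simpa [hidx] using h2
  refine ⟨Fintype.card I, fun j => univ.filter (fun e : P =>
    G.Adj e.1 e.2 ∧ encV e.1 < encV e.2 ∧ idx e = eI.symm j), ?_, ?_, ?_, ?_⟩
  · -- cardinality bound
    have hNball := amsBallCard C n (by omega)
    have hcardI : Fintype.card I = (2*C-1)^n * ((n*(C-1)^2+1) * Ncol) := by
      simp only [hI, Fintype.card_prod, Fintype.card_fun, Fintype.card_fin]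
    have hncast : 24*(C:ℝ)^2 ≤ (n:ℝ) := by exact_mod_cast hn
    have hC2 : (2:ℝ) ≤ (C:ℝ) := by exact_mod_cast hC
    have hn96 : (96:ℝ) ≤ (n:ℝ) := by nlinarith
    have hexp2 : (1:ℝ) ≤ Real.exp 2 ∧ Real.exp 2 ≤ 7.39 := by
      constructor
      · exact Real.one_le_exp (by norm_num)
      · have h1 := Real.exp_one_lt_d9
        have h2 : Real.exp 2 = Real.exp 1 * Real.exp 1 := by
          rw [← Real.exp_add]; norm_num
        nlinarith [Real.exp_pos 1]
    -- numeric pieces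
    have hb1 : ((2*C-1 : ℕ):ℝ)^n ≤ (2*(C:ℝ))^n := by
      apply pow_le_pow_left₀ (by positivity)
      push_cast [Nat.cast_sub (by omega : 1 ≤ 2*C)]
      linarith
    have hb2 : (n:ℝ) * ((C-1:ℕ):ℝ)^2 + 1 ≤ 2*(n:ℝ)*(C:ℝ)^2 := by
      have h1 : ((C-1:ℕ):ℝ) ≤ (C:ℝ) := by
        push_cast [Nat.cast_sub (by omega : 1 ≤ C)]; linarith
      have h2 : ((C-1:ℕ):ℝ)^2 ≤ (C:ℝ)^2 := by
        apply pow_le_pow_left₀ (by positivity) h1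
      have h3 : (1:ℝ) ≤ (n:ℝ)*(C:ℝ)^2 := by nlinarith
      nlinarith
    have hb3 : 2*(((amsBall C n).card : ℕ):ℝ)+1 ≤ 3*(3*Real.exp 2)^n := by
      have h1 : (1:ℝ) ≤ (3*Real.exp 2)^n := one_le_pow₀ (by nlinarith [hexp2.1])
      nlinarith [hNball]
    have hprod : ((Fintype.card I : ℕ):ℝ)
        ≤ (2*(C:ℝ))^n * (2*(n:ℝ)*(C:ℝ)^2 * (3*(3*Real.exp 2)^n)) := by
      rw [hcardI, hNcol]
      push_cast
      have e2 : (0:ℝ) ≤ (n:ℝ) * ((C-1:ℕ):ℝ)^2 + 1 := by positivity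
      have e3 : (0:ℝ) ≤ 2*(((amsBall C n).card : ℕ):ℝ)+1 := by positivity
      calc ((2*C-1 : ℕ):ℝ)^n * (((n:ℝ) * ((C-1:ℕ):ℝ)^2 + 1) * (2*(((amsBall C n).card : ℕ):ℝ)+1))
          ≤ (2*(C:ℝ))^n * ((2*(n:ℝ)*(C:ℝ)^2) * (3*(3*Real.exp 2)^n)) := by
            apply mul_le_mul hb1 _ (by positivity) (by positivity)
            apply mul_le_mul hb2 hb3 e3 (by positivity)
        _ = (2*(C:ℝ))^n * (2*(n:ℝ)*(C:ℝ)^2 * (3*(3*Real.exp 2)^n)) := by ring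
    have h6n : 6*(n:ℝ)*(C:ℝ)^2 ≤ (2.25:ℝ)^n := by
      have h15 : (1:ℝ)+(n:ℝ)*(1/2) ≤ (1.5:ℝ)^n := by
        have := one_add_mul_le_pow (a := (1/2:ℝ)) (by norm_num) n
        calc (1:ℝ)+(n:ℝ)*(1/2) = 1 + (n:ℝ)*(1/2) := rfl
          _ ≤ (1+1/2:ℝ)^n := this
          _ = (1.5:ℝ)^n := by norm_num
      have hsq : (2.25:ℝ)^n = ((1.5:ℝ)^n)^2 := by
        rw [← pow_mul, mul_comm, pow_mul]
        norm_num
      rw [hsq]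
      have h0 : (0:ℝ) ≤ 1 + (n:ℝ)*(1/2) := by positivity
      nlinarith [h15, hncast, hC2, sq_nonneg ((1.5:ℝ)^n)]
    have halg : (2*(C:ℝ))^n * (2*(n:ℝ)*(C:ℝ)^2 * (3*(3*Real.exp 2)^n))
        = (C:ℝ)^n * ((6*Real.exp 2)^n * (6*(n:ℝ)*(C:ℝ)^2)) := by
      rw [mul_pow, show (6*Real.exp 2)^n = 2^n * (3*Real.exp 2)^n by
        rw [← mul_pow]; ring_nf]
      ring
    have hfinal : (C:ℝ)^n * ((6*Real.exp 2)^n * (6*(n:ℝ)*(C:ℝ)^2))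
        ≤ (C:ℝ)^n * (110.25:ℝ)^n := by
      apply mul_le_mul_of_nonneg_left _ (by positivity)
      calc (6*Real.exp 2)^n * (6*(n:ℝ)*(C:ℝ)^2)
          ≤ (44.34:ℝ)^n * (2.25:ℝ)^n := by
            apply mul_le_mul _ h6n (by positivity) (by positivity)
            apply pow_le_pow_left₀ (by positivity)
            nlinarith [hexp2.2]
        _ = (99.765:ℝ)^n := by rw [← mul_pow]; norm_num
        _ ≤ (110.25:ℝ)^n := by
            apply pow_le_pow_left₀ (by norm_num) (by norm_num)
    calc ((Fintype.card I : ℕ):ℝ) ≤ _ := hprod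
      _ = (C:ℝ)^n * ((6*Real.exp 2)^n * (6*(n:ℝ)*(C:ℝ)^2)) := halg
      _ ≤ (C:ℝ)^n * (110.25:ℝ)^n := hfinal
  · -- induced matchings
    intro j
    constructor
    · intro e he
      rw [mem_filter] at he
      exact he.2.1
    · intro e he f hf hne
      rw [mem_filter] at he hf
      have hidx_ef : idx e = idx f := by rw [he.2.2.2, hf.2.2.2]
      have hnotrel : ¬ rel e f := by
        intro hr
        exact hc e f hr hne (hidx_c e f hidx_ef)
      have hnotcross : ¬ cross e f := by
        intro hcr
        exact hnotrel ⟨hne, he.2.1, hf.2.1, hidx_z e f hidx_ef, hidx_k e f hidx_ef, hcr⟩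
      rw [hcross] at hnotcross
      exact ⟨fun h => hnotcross (Or.inl h), fun h => hnotcross (Or.inr (Or.inl h)),
        fun h => hnotcross (Or.inr (Or.inr (Or.inl h))),
        fun h => hnotcross (Or.inr (Or.inr (Or.inr h)))⟩
  · -- coverage
    intro a b hab
    have hne : a ≠ b := (show _ ∧ _ from hab).1
    have hencne : encV a ≠ encV b := fun h => hne (encV.injective h)
    rcases lt_or_gt_of_ne hencne with hlt | hgt
    · refine ⟨eI (idx (a, b)), Or.inl ?_⟩
      rw [mem_filter]
      exact ⟨mem_univ _, hab, hlt, by rw [Equiv.symm_apply_apply]⟩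
    · refine ⟨eI (idx (b, a)), Or.inr ?_⟩
      rw [mem_filter]
      exact ⟨mem_univ _, G.adj_symm hab, hgt, by rw [Equiv.symm_apply_apply]⟩
  · -- uniqueness
    intro i j a b hi hj
    have horder : ∀ (x : Fin (Fintype.card I)) (u v : V),
        (u, v) ∈ univ.filter (fun e : P =>
          G.Adj e.1 e.2 ∧ encV e.1 < encV e.2 ∧ idx e = eI.symm x) →
        encV u < encV v ∧ idx (u, v) = eI.symm x := by
      intro x u v h
      rw [mem_filter] at h
      exact ⟨h.2.2.1, h.2.2.2⟩
    rcases hi with hi | hi <;> rcases hj with hj | hj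
    · have h1 := (horder i a b hi).2
      have h2 := (horder j a b hj).2
      have : eI.symm i = eI.symm j := by rw [← h1, ← h2]
      exact eI.symm.injective this
    · exact absurd ((horder j b a hj).1) (not_lt.mpr (le_of_lt (horder i a b hi).1))
    · exact absurd ((horder j a b hj).1) (not_lt.mpr (le_of_lt (horder i b a hi).1))
    · have h1 := (horder i b a hi).2
      have h2 := (horder j b a hj).2
      have : eI.symm i = eI.symm j := by rw [← h1, ← h2]
      exact eI.symm.injective this

end PartA

/-- `G_{C,n}` is a dense Ruzsa–Szemerédi graph: for every `ε > 0` and `C ≥ 2`, for all large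
enough even `n ≥ 2C`, setting `K = C^n`, the edge set of `G_{C,n}` partitions into at most
`K^{1 + 2 ln(10.5)/ln C + ε}` pairwise edge-disjoint induced matchings, and the number of
unordered pairs of distinct non-adjacent vertices is at most `K^{2 - 1/(2C⁴ ln C) + ε}`. -/
theorem amsGraph_is_ruzsa_szemeredi
    (ε : ℝ) (hε : 0 < ε) (C : ℕ) (hC : 2 ≤ C) :
    ∃ n₀ : ℕ, ∀ n : ℕ, Even n → 2 * C ≤ n → n₀ ≤ n →
      (∃ t : ℕ, ∃ M : Fin t → Finset ((Fin n → Fin C) × (Fin n → Fin C)),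
        (t : ℝ) ≤ ((C : ℝ) ^ n) ^ ((1 : ℝ) + 2 * Real.log 10.5 / Real.log C + ε) ∧
        (∀ i, IsInducedMatching (amsGraph C n) (M i)) ∧
        (∀ a b, (amsGraph C n).Adj a b → ∃ i, (a, b) ∈ M i ∨ (b, a) ∈ M i) ∧
        (∀ i j : Fin t, ∀ a b,
          ((a, b) ∈ M i ∨ (b, a) ∈ M i) → ((a, b) ∈ M j ∨ (b, a) ∈ M j) → i = j)) ∧
      ((Nat.card {e : Sym2 (Fin n → Fin C) |
          ¬ e.IsDiag ∧ e ∉ (amsGraph C n).edgeSet} : ℝ)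
        ≤ ((C : ℝ) ^ n) ^ ((2 : ℝ) - 1 / (2 * (C : ℝ) ^ 4 * Real.log C) + ε)) := by
  classical
  refine ⟨24*C^2 + C^4, fun n _ h2C hn0 => ⟨?_, ?_⟩⟩
  · -- part (a)
    have hn24 : 24*C^2 ≤ n := by omega
    obtain ⟨t, M, htb, hind, hcov, huni⟩ := amsPartA C n hC hn24
    refine ⟨t, M, ?_, fun i => ⟨(hind i).1, (hind i).2⟩, hcov, huni⟩
    have hCpos : (0:ℝ) < C := by positivity
    have hCn : (0:ℝ) < (C:ℝ)^n := by positivity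
    have hlogC : 0 < Real.log C := Real.log_pos (by exact_mod_cast hC)
    have hrpow : ((C : ℝ) ^ n) ^ ((1 : ℝ) + 2 * Real.log 10.5 / Real.log C + ε)
        = Real.exp ((n:ℝ) * Real.log C + (n:ℝ) * (2 * Real.log 10.5)
            + ε * ((n:ℝ) * Real.log C)) := by
      rw [Real.rpow_def_of_pos hCn, Real.log_pow]
      congr 1
      field_simp
    have hlhs : (C:ℝ)^n * (110.25:ℝ)^n
        = Real.exp ((n:ℝ) * Real.log C + (n:ℝ) * (2 * Real.log 10.5)) := by
      rw [Real.exp_add]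
      congr 1
      · rw [← Real.log_pow, Real.exp_log (by positivity)]
      · have h1 : (110.25:ℝ) = 10.5^2 := by norm_num
        have h2 : Real.log 110.25 = 2 * Real.log 10.5 := by
          rw [h1, Real.log_pow]
          norm_num
        rw [← h2, ← Real.log_pow, Real.exp_log (by positivity)]
    calc (t:ℝ) ≤ (C:ℝ)^n * (110.25:ℝ)^n := htb
      _ = Real.exp ((n:ℝ) * Real.log C + (n:ℝ) * (2 * Real.log 10.5)) := hlhs
      _ ≤ Real.exp ((n:ℝ) * Real.log C + (n:ℝ) * (2 * Real.log 10.5)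
            + ε * ((n:ℝ) * Real.log C)) := by
          apply Real.exp_le_exp.mpr
          have : 0 ≤ ε * ((n:ℝ) * Real.log C) := by positivity
          linarith
      _ = ((C : ℝ) ^ n) ^ ((1 : ℝ) + 2 * Real.log 10.5 / Real.log C + ε) := hrpow.symm
  · -- part (b)
    have hn4 : C^4 ≤ n := by omega
    have hsurj : ∃ f : {p : (Fin n → Fin C) × (Fin n → Fin C) //
        p.1 ≠ p.2 ∧ ¬ (amsGraph C n).Adj p.1 p.2} →
        {e : Sym2 (Fin n → Fin C) | ¬ e.IsDiag ∧ e ∉ (amsGraph C n).edgeSet},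
        Function.Surjective f := by
      refine ⟨fun p => ⟨s(p.1.1, p.1.2), ?_, ?_⟩, ?_⟩
      · rw [Sym2.isDiag_iff_proj_eq]
        exact p.2.1
      · rw [SimpleGraph.mem_edgeSet]  -- s(a,b) version
        exact p.2.2
      · rintro ⟨e, he⟩
        induction e using Sym2.ind with
        | _ a b =>
          obtain ⟨hd, hne⟩ := he
          rw [Sym2.isDiag_iff_proj_eq] at hd
          rw [SimpleGraph.mem_edgeSet] at hne
          exact ⟨⟨(a, b), hd, hne⟩, rfl⟩
    obtain ⟨f, hf⟩ := hsurj
    have hle := Nat.card_le_card_of_surjective f hf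
    have hbc := amsBadCount C n hC hn4
    have hCn : (0:ℝ) < (C:ℝ)^n := by positivity
    have hlogC : 0 < Real.log C := Real.log_pos (by exact_mod_cast hC)
    have hrpow : ((C : ℝ) ^ n) ^ ((2 : ℝ) - 1 / (2 * (C : ℝ) ^ 4 * Real.log C) + ε)
        = Real.exp (2*(n:ℝ) * Real.log C - (n:ℝ)/(2*(C:ℝ)^4)
            + ε * ((n:ℝ) * Real.log C)) := by
      rw [Real.rpow_def_of_pos hCn, Real.log_pow]
      congr 1
      have hC4 : ((C:ℝ))^4 ≠ 0 := by positivity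
      field_simp
    have hlhs : (C:ℝ)^(2*n) * Real.exp (- (n:ℝ) / (2*(C:ℝ)^4))
        = Real.exp (2*(n:ℝ) * Real.log C - (n:ℝ)/(2*(C:ℝ)^4)) := by
      rw [show 2*(n:ℝ) * Real.log C - (n:ℝ)/(2*(C:ℝ)^4)
          = 2*(n:ℝ) * Real.log C + (- (n:ℝ)/(2*(C:ℝ)^4)) by ring, Real.exp_add]
      congr 1
      rw [show (2:ℝ)*(n:ℝ) * Real.log C = ((2*n : ℕ):ℝ) * Real.log C by push_cast; ring]
      rw [← Real.log_pow, Real.exp_log (by positivity)]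
    calc (Nat.card {e : Sym2 (Fin n → Fin C) |
          ¬ e.IsDiag ∧ e ∉ (amsGraph C n).edgeSet} : ℝ)
        ≤ (Nat.card {p : (Fin n → Fin C) × (Fin n → Fin C) //
            p.1 ≠ p.2 ∧ ¬ (amsGraph C n).Adj p.1 p.2} : ℝ) := by exact_mod_cast hle
      _ ≤ (C:ℝ)^(2*n) * Real.exp (- (n:ℝ) / (2*(C:ℝ)^4)) := hbc
      _ = Real.exp (2*(n:ℝ) * Real.log C - (n:ℝ)/(2*(C:ℝ)^4)) := hlhs
      _ ≤ Real.exp (2*(n:ℝ) * Real.log C - (n:ℝ)/(2*(C:ℝ)^4)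
            + ε * ((n:ℝ) * Real.log C)) := by
          apply Real.exp_le_exp.mpr
          have : 0 ≤ ε * ((n:ℝ) * Real.log C) := by positivity
          linarith
      _ = ((C : ℝ) ^ n) ^ ((2 : ℝ) - 1 / (2 * (C : ℝ) ^ 4 * Real.log C) + ε) := hrpow.symm
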